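/- If column i uses colors only from pair Pᵢ and column i+1 uses colors only from pair Pᵢ₊₁ with Pᵢ ∩ Pᵢ₊₁ = ∅, then no horizontal match of three equal colors can span cells in both columns, and swapping a gem between columns i and i+1 places a color from Pᵢ into a column whose other cells are from Pᵢ₊₁ (and vice versa), so no vertical match of three equal colors is created by such a swap provided each column's colors alternate. -/
import Mathlib


theorem disjoint_pairs_no_match (colA colB : ℤ → Fin 6) (P Q : Finset (Fin 6))
    (hPQ : Disjoint P Q)
    (hA : ∀ j, colA j ∈ P) (hB : ∀ j, colB j ∈ Q)
    (hAalt : ∀ j, colA j ≠ colA (j + 1)) (hBalt : ∀ j, colB j ≠ colB (j + 1)) :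
    -- no horizontal match of three equal colors can span both columns
    (∀ j, colA j ≠ colB j) ∧
    -- swapping the gems at row k between the two columns creates no vertical match
    (∀ k : ℤ,
      (∀ j, ¬ (((fun j => if j = k then colB k else colA j) j =
                 (fun j => if j = k then colB k else colA j) (j + 1)) ∧
               ((fun j => if j = k then colB k else colA j) (j + 1) =
                 (fun j => if j = k then colB k else colA j) (j + 2)))) ∧
      (∀ j, ¬ (((fun j => if j = k then colA k else colB j) j =
                 (fun j => if j = k then colA k else colB j) (j + 1)) ∧
               ((fun j => if j = k then colA k else colB j) (j + 1) =
                 (fun j => if j = k then colA k else colB j) (j + 2))))) := by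
  have hAB : ∀ a b : ℤ, colA a ≠ colB b := by
    intro a b h
    exact (Finset.disjoint_left.mp hPQ (hA a)) (h ▸ hB b)
  refine ⟨fun j => hAB j j, fun k => ⟨?_, ?_⟩⟩
  · intro j h
    simp only at h
    rcases h with ⟨h1, -⟩
    by_cases hj : j = k
    · subst hj
      rw [if_pos rfl, if_neg (by omega)] at h1
      exact hAB (j + 1) j h1.symm
    · rw [if_neg hj] at h1
      by_cases hj1 : j + 1 = k
      · rw [if_pos hj1] at h1; exact hAB j k h1
      · rw [if_neg hj1] at h1; exact hAalt j h1
  · intro j h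
    simp only at h
    rcases h with ⟨h1, -⟩
    by_cases hj : j = k
    · subst hj
      rw [if_pos rfl, if_neg (by omega)] at h1
      exact hAB j (j + 1) h1
    · rw [if_neg hj] at h1
      by_cases hj1 : j + 1 = k
      · rw [if_pos hj1] at h1; exact hAB k j h1.symm
      · rw [if_neg hj1] at h1; exact hBalt j h1
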